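/- For all k ≥ 1, the pre-arrival sojourn time seen by the k-th arriving customer at the pooled server never exceeds the minimum of the pre-arrival sojourn times at the two split servers: G(k) ≤ min(g1(k), g2(k)). -/

import Mathlib

/-- Two-server greedy model (all customers admitted): for every `k ≥ 1`, the
pre-arrival sojourn time at the pooled server never exceeds the minimum of the
pre-arrival sojourn times at the two split servers. -/
theorem pooled_prearrival_sojourn_le_min_split
    (μ1 μ2 : ℝ) (hμ1 : 0 < μ1) (hμ2 : 0 < μ2)
    (Δ : ℕ → ℝ) (hΔ : ∀ k, 0 ≤ Δ k)
    (f1 f2 F g1 g2 G : ℕ → ℝ)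
    (hf10 : f1 0 = 1 / μ1) (hf20 : f2 0 = 1 / μ2) (hF0 : F 0 = 1 / (μ1 + μ2))
    (hg1 : ∀ k, g1 (k + 1) = max (f1 k - Δ k) (1 / μ1))
    (hg2 : ∀ k, g2 (k + 1) = max (f2 k - Δ k) (1 / μ2))
    (hG : ∀ k, G (k + 1) = max (F k - Δ k) (1 / (μ1 + μ2)))
    (hf1 : ∀ k, f1 (k + 1) =
      if g1 (k + 1) ≤ g2 (k + 1) then g1 (k + 1) + 1 / μ1 else g1 (k + 1))
    (hf2 : ∀ k, f2 (k + 1) =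
      if g1 (k + 1) ≤ g2 (k + 1) then g2 (k + 1) else g2 (k + 1) + 1 / μ2)
    (hF : ∀ k, F (k + 1) = G (k + 1) + 1 / (μ1 + μ2)) :
    ∀ k, 1 ≤ k → G k ≤ min (g1 k) (g2 k) := by
  have hs12 : (0:ℝ) < μ1 + μ2 := by linarith
  have ea : μ1 * (1 / μ1) = 1 := by field_simp
  have eb : μ2 * (1 / μ2) = 1 := by field_simp
  have es : (μ1 + μ2) * (1 / (μ1 + μ2)) = 1 := by field_simp
  have hsa : 1 / (μ1 + μ2) ≤ 1 / μ1 :=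
    one_div_le_one_div_of_le hμ1 (by linarith)
  have hsb : 1 / (μ1 + μ2) ≤ 1 / μ2 :=
    one_div_le_one_div_of_le hμ2 (by linarith)
  -- key invariant: F ≤ f1, F ≤ f2 and (μ1+μ2)F + 1 ≤ μ1 f1 + μ2 f2
  have key : ∀ k, F k ≤ f1 k ∧ F k ≤ f2 k ∧
      (μ1 + μ2) * F k + 1 ≤ μ1 * f1 k + μ2 * f2 k := by
    intro k
    induction k with
    | zero =>
      refine ⟨by rw [hF0, hf10]; exact hsa, by rw [hF0, hf20]; exact hsb, ?_⟩
      rw [hF0, hf10, hf20]; linarith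
    | succ k ih =>
      obtain ⟨h1, h2, h3⟩ := ih
      have hg1l : f1 k - Δ k ≤ g1 (k + 1) := by rw [hg1]; exact le_max_left _ _
      have hg1r : 1 / μ1 ≤ g1 (k + 1) := by rw [hg1]; exact le_max_right _ _
      have hg2l : f2 k - Δ k ≤ g2 (k + 1) := by rw [hg2]; exact le_max_left _ _
      have hg2r : 1 / μ2 ≤ g2 (k + 1) := by rw [hg2]; exact le_max_right _ _
      have hGg1 : G (k + 1) ≤ g1 (k + 1) := by
        rw [hG]; exact max_le (by linarith) (le_trans hsa hg1r)
      have hGg2 : G (k + 1) ≤ g2 (k + 1) := by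
        rw [hG]; exact max_le (by linarith) (le_trans hsb hg2r)
      have hR : (μ1 + μ2) * G (k + 1) + 1 ≤ μ1 * g1 (k + 1) + μ2 * g2 (k + 1) := by
        have m1 : μ1 * (f1 k - Δ k) ≤ μ1 * g1 (k + 1) :=
          mul_le_mul_of_nonneg_left hg1l hμ1.le
        have m2 : μ2 * (f2 k - Δ k) ≤ μ2 * g2 (k + 1) :=
          mul_le_mul_of_nonneg_left hg2l hμ2.le
        have m3 : μ1 * (1 / μ1) ≤ μ1 * g1 (k + 1) :=
          mul_le_mul_of_nonneg_left hg1r hμ1.le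
        have m4 : μ2 * (1 / μ2) ≤ μ2 * g2 (k + 1) :=
          mul_le_mul_of_nonneg_left hg2r hμ2.le
        rw [hG k]
        rcases max_cases (F k - Δ k) (1 / (μ1 + μ2)) with ⟨he, _⟩ | ⟨he, _⟩ <;>
          rw [he] <;> linarith [h3, m1, m2, m3, m4, es, ea, eb]
      by_cases hc : g1 (k + 1) ≤ g2 (k + 1)
      · rw [hf1 k, hf2 k, hF k, if_pos hc, if_pos hc]
        have m5 : μ1 * g1 (k + 1) ≤ μ1 * g2 (k + 1) :=
          mul_le_mul_of_nonneg_left hc hμ1.le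
        have h5 : (μ1 + μ2) * (G (k + 1) + 1 / (μ1 + μ2)) ≤ (μ1 + μ2) * g2 (k + 1) := by
          linarith [hR, es, m5]
        refine ⟨by linarith, (mul_le_mul_iff_right₀ hs12).mp h5, ?_⟩
        linarith [hR, es, ea, eb]
      · push_neg at hc
        rw [hf1 k, hf2 k, hF k, if_neg (not_le.mpr hc), if_neg (not_le.mpr hc)]
        have m5 : μ2 * g2 (k + 1) ≤ μ2 * g1 (k + 1) :=
          mul_le_mul_of_nonneg_left hc.le hμ2.le
        have h5 : (μ1 + μ2) * (G (k + 1) + 1 / (μ1 + μ2)) ≤ (μ1 + μ2) * g1 (k + 1) := by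
          linarith [hR, es, m5]
        refine ⟨(mul_le_mul_iff_right₀ hs12).mp h5, by linarith, ?_⟩
        linarith [hR, es, ea, eb]
  intro k hk
  obtain ⟨j, rfl⟩ : ∃ j, k = j + 1 := ⟨k - 1, (Nat.succ_pred_eq_of_pos hk).symm⟩
  obtain ⟨h1, h2, _⟩ := key j
  have hg1r : 1 / μ1 ≤ g1 (j + 1) := by rw [hg1]; exact le_max_right _ _
  have hg2r : 1 / μ2 ≤ g2 (j + 1) := by rw [hg2]; exact le_max_right _ _
  have hg1l : f1 j - Δ j ≤ g1 (j + 1) := by rw [hg1]; exact le_max_left _ _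
  have hg2l : f2 j - Δ j ≤ g2 (j + 1) := by rw [hg2]; exact le_max_left _ _
  refine le_min ?_ ?_
  · rw [hG]; exact max_le (by linarith) (le_trans hsa hg1r)
  · rw [hG]; exact max_le (by linarith) (le_trans hsb hg2r)
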